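/- arXiv:0805.3214 — 2 statements merged into one kernel-verified Lean document; each statement's English description precedes it below -/
import Mathlib

section
/- Let K be a field of characteristic zero and let K = K_0 ⊆ K_1 ⊆ ... ⊆ K_r be a tower of fields such that each K_i is a splitting field over K_{i-1} of a polynomial of the form x^{ℓ_i} - a_i with ℓ_i > 0 and a_i ∈ K_{i-1} nonzero. Then the extension K_r / K is a solvable (Galois-solvable) extension, i.e., every element of K_r lies in a solvable closure of K; in particular K_r / K is an algebraic extension. -/
/-- A root tower over `K` inside an extension `L`: a finite chain of intermediate fields
`K = K₀ ⊆ K₁ ⊆ ⋯ ⊆ K_r = L` such that each step is obtained as the splitting field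
(over the previous one) of a binomial `x ^ ℓ - a` with `ℓ > 0` and `a ≠ 0` in the
previous field. -/
structure RootTower (K L : Type*) [Field K] [Field L] [Algebra K L] where
  r : ℕ
  step : Fin (r + 1) → IntermediateField K L
  first : step 0 = ⊥
  last : step (Fin.last r) = ⊤
  radical : ∀ i : Fin r, ∃ (ℓ : ℕ) (a : L), 0 < ℓ ∧ a ∈ step i.castSucc ∧ a ≠ 0 ∧
    step i.succ = step i.castSucc ⊔ IntermediateField.adjoin K {x : L | x ^ ℓ = a}

/-- If `K` has characteristic zero and `K = K₀ ⊆ ⋯ ⊆ K_r = L` is a root tower, then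
`L/K` is an algebraic extension and is Galois-solvable: every element of `L` is
algebraic over `K` with solvable Galois group of its minimal polynomial (hence lies
in a solvable closure of `K`). -/
theorem root_tower_solvable {K L : Type*} [Field K] [Field L] [Algebra K L] [CharZero K]
    (T : RootTower K L) :
    Algebra.IsAlgebraic K L ∧
      ∀ x : L, IsIntegral K x ∧ IsSolvable (minpoly K x).Gal := by
  have key : ∀ i : Fin (T.r + 1), T.step i ≤ solvableByRad K L := by
    intro i
    induction i using Fin.induction with
    | zero => rw [T.first]; exact bot_le
    | succ j ih =>
      obtain ⟨ℓ, a, hℓ, ha, ha0, hstep⟩ := T.radical j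
      rw [hstep, sup_le_iff]
      refine ⟨ih, IntermediateField.adjoin_le_iff.mpr ?_⟩
      intro x hx
      exact solvableByRad.rad_mem hℓ.ne' (hx ▸ ih ha)
  have hrad : ∀ x : L, x ∈ solvableByRad K L := by
    intro x
    exact key (Fin.last T.r) (T.last ▸ IntermediateField.mem_top)
  have hint : ∀ x : L, IsIntegral K x := by
    intro x
    have : IsIntegral K (⟨x, hrad x⟩ : solvableByRad K L) :=
      IntermediateField.isIntegral_iff.mpr (isIntegral_of_mem_solvableByRad (hrad x))
    exact this.map (IsScalarTower.toAlgHom K (solvableByRad K L) L)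
  refine ⟨⟨fun x => (hint x).isAlgebraic⟩, fun x => ⟨hint x, ?_⟩⟩
  exact solvableByRad.isSolvable' (hrad x) (minpoly.irreducible (hint x)) (minpoly.aeval K x)
end

section
/- Let F be an algebraically closed field of characteristic zero and let f ∈ F[x₁, x₂] be irreducible of total degree d ≥ 2 with partial degree deg_{x₁} f = r ≤ 4. Write g(x₁) = f(x₁, t) ∈ F(t)[x₁]. Then g has degree r in x₁, its splitting field over F(t) is contained in the top of a root tower (g is solvable by radicals over F(t)), and if α₁, ..., α_r are the roots of g in that field, then f(α_i(t), t) = 0 for each i. Moreover, for all but finitely many points (a, b) on the curve f = 0, there exists i such that a = α_i(b) (evaluating at t = b). -/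
set_option linter.unusedSectionVars false

section Radical
variable {Ω : Type*} [Field Ω] [IsAlgClosed Ω] [CharZero Ω]

lemma exists_root_quadratic (b c : Ω) : ∃ z : Ω, z ^ 2 + b * z + c = 0 := by
  have hd : (Polynomial.X ^ 2 + Polynomial.C b * Polynomial.X + Polynomial.C c).degree = 2 := by
    compute_degree!
  obtain ⟨z, hz⟩ := IsAlgClosed.exists_root
    (p := Polynomial.X ^ 2 + Polynomial.C b * Polynomial.X + Polynomial.C c)
    (by rw [hd]; norm_num)
  refine ⟨z, ?_⟩
  simpa [Polynomial.IsRoot] using hz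

lemma exists_root_cubic (b c d : Ω) : ∃ z : Ω, z ^ 3 + b * z ^ 2 + c * z + d = 0 := by
  have hd : (Polynomial.X ^ 3 + Polynomial.C b * Polynomial.X ^ 2 + Polynomial.C c * Polynomial.X
      + Polynomial.C d).degree = 3 := by compute_degree!
  obtain ⟨z, hz⟩ := IsAlgClosed.exists_root
    (p := Polynomial.X ^ 3 + Polynomial.C b * Polynomial.X ^ 2 + Polynomial.C c * Polynomial.X
      + Polynomial.C d) (by rw [hd]; norm_num)
  refine ⟨z, ?_⟩
  simpa [Polynomial.IsRoot] using hz

lemma mem_of_quadratic (E : Subfield Ω)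
    (hrad : ∀ (x : Ω) (n : ℕ), n ≠ 0 → x ^ n ∈ E → x ∈ E)
    {x b c : Ω} (hb : b ∈ E) (hc : c ∈ E) (h : x ^ 2 + b * x + c = 0) : x ∈ E := by
  have h4 : (4 : Ω) ∈ E := by simpa using natCast_mem E 4
  have h2m : (2 : Ω) ∈ E := by simpa using natCast_mem E 2
  have h2 : (2 * x + b) ^ 2 = b ^ 2 - 4 * c := by linear_combination 4 * h
  have hmem : 2 * x + b ∈ E := hrad _ 2 two_ne_zero
    (by rw [h2]; exact E.sub_mem (pow_mem hb 2) (E.mul_mem h4 hc))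
  have hx : x = ((2 * x + b) - b) / 2 := by ring
  rw [hx]
  exact E.div_mem (E.sub_mem hmem hb) h2m

end Radical

section Radical2
variable {Ω : Type*} [Field Ω] [IsAlgClosed Ω] [CharZero Ω]

set_option maxHeartbeats 1000000 in
lemma mem_of_cubic (E : Subfield Ω)
    (hrad : ∀ (x : Ω) (n : ℕ), n ≠ 0 → x ^ n ∈ E → x ∈ E)
    {x b c d : Ω} (hb : b ∈ E) (hc : c ∈ E) (hd : d ∈ E)
    (hx : x ^ 3 + b * x ^ 2 + c * x + d = 0) : x ∈ E := by
  have h3m : (3 : Ω) ∈ E := by simpa using natCast_mem E 3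
  have h9m : (9 : Ω) ∈ E := by simpa using natCast_mem E 9
  have h2m : (2 : Ω) ∈ E := by simpa using natCast_mem E 2
  have h27m : (27 : Ω) ∈ E := by simpa using natCast_mem E 27
  obtain ⟨ω, hω0⟩ := exists_root_quadratic (1 : Ω) 1
  have hω : ω ^ 2 + ω + 1 = 0 := by linear_combination hω0
  obtain ⟨β, hβ⟩ := exists_root_quadratic (b + x) (c + b * x + x ^ 2)
  have hωE : ω ∈ E := by
    refine hrad ω 3 (by norm_num) ?_
    have h1 : ω ^ 3 = 1 := by linear_combination (ω - 1) * hω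
    rw [h1]; exact E.one_mem
  set u : Ω := x + ω * β + ω ^ 2 * (-(b + x) - β) with hu
  set v : Ω := x + ω ^ 2 * β + ω * (-(b + x) - β) with hv
  have h1 : u * v = b ^ 2 - 3 * c := by
    rw [hu, hv]
    linear_combination ((-1) * ω ^ 2 * β ^ 2 + (-1) * ω ^ 2 * β * x + (-1) * ω ^ 2 * β * b + 3 * ω * β ^ 2 + 3 * ω * β * x + 3 * ω * β * b + ω * x ^ 2 + 2 * ω * x * b + ω * b ^ 2 + (-3) * β ^ 2 + (-3) * β * x + (-3) * β * b + (-2) * x ^ 2 + (-3) * x * b + (-1) * b ^ 2) * hω + (3 : Ω) * hβ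
  have h2 : u ^ 3 + v ^ 3 = -2 * b ^ 3 + 9 * b * c - 27 * d := by
    rw [hu, hv]
    linear_combination ((-3) * ω ^ 4 * β ^ 2 * x + (-3) * ω ^ 4 * β ^ 2 * b + (-3) * ω ^ 4 * β * x ^ 2 + (-6) * ω ^ 4 * β * x * b + (-3) * ω ^ 4 * β * b ^ 2 + (-1) * ω ^ 4 * x ^ 3 + (-3) * ω ^ 4 * x ^ 2 * b + (-3) * ω ^ 4 * x * b ^ 2 + (-1) * ω ^ 4 * b ^ 3 + 6 * ω ^ 3 * β ^ 2 * x + 6 * ω ^ 3 * β ^ 2 * b + 6 * ω ^ 3 * β * x ^ 2 + 12 * ω ^ 3 * β * x * b + 6 * ω ^ 3 * β * b ^ 2 + ω ^ 3 * x ^ 3 + 3 * ω ^ 3 * x ^ 2 * b + 3 * ω ^ 3 * x * b ^ 2 + ω ^ 3 * b ^ 3 + 6 * ω ^ 2 * β ^ 2 * x + 6 * ω ^ 2 * β * x ^ 2 + 6 * ω ^ 2 * β * x * b + 3 * ω ^ 2 * x ^ 3 + 6 * ω ^ 2 * x ^ 2 * b + 3 * ω ^ 2 * x * b ^ 2 +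 (-27) * ω * β ^ 2 * x + (-9) * ω * β ^ 2 * b + (-27) * ω * β * x ^ 2 + (-36) * ω * β * x * b + (-9) * ω * β * b ^ 2 + (-5) * ω * x ^ 3 + (-12) * ω * x ^ 2 * b + (-9) * ω * x * b ^ 2 + (-2) * ω * b ^ 3 + 27 * β ^ 2 * x + 9 * β ^ 2 * b + 27 * β * x ^ 2 + 36 * β * x * b + 9 * β * b ^ 2 + 2 * x ^ 3 + 9 * x ^ 2 * b + 9 * x * b ^ 2 + 2 * b ^ 3) * hω + ((-27) * x + (-9) * b) * hβ + (27 : Ω) * hx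
  have hSmem : -2 * b ^ 3 + 9 * b * c - 27 * d ∈ E := by
    refine E.sub_mem (E.add_mem ?_ ?_) (E.mul_mem h27m hd)
    · exact E.mul_mem (E.neg_mem h2m) (pow_mem hb 3)
    · exact E.mul_mem (E.mul_mem h9m hb) hc
  have hPmem : b ^ 2 - 3 * c ∈ E := E.sub_mem (pow_mem hb 2) (E.mul_mem h3m hc)
  have hu3 : u ^ 3 ∈ E := by
    refine mem_of_quadratic E hrad (b := -(u ^ 3 + v ^ 3)) (c := (u * v) ^ 3) ?_ ?_ (by ring)
    · rw [h2]; exact E.neg_mem hSmem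
    · rw [h1]; exact pow_mem hPmem 3
  have hv3 : v ^ 3 ∈ E := by
    refine mem_of_quadratic E hrad (b := -(u ^ 3 + v ^ 3)) (c := (u * v) ^ 3) ?_ ?_ (by ring)
    · rw [h2]; exact E.neg_mem hSmem
    · rw [h1]; exact pow_mem hPmem 3
  have huE : u ∈ E := hrad u 3 (by norm_num) hu3
  have hvE : v ∈ E := hrad v 3 (by norm_num) hv3
  have h3 : u + v - b = 3 * x := by
    rw [hu, hv]
    linear_combination ((-1) * x + (-1) * b) * hω
  have hxeq : x = (u + v - b) / 3 := by rw [h3]; ring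
  rw [hxeq]
  exact E.div_mem (E.sub_mem (E.add_mem huE hvE) hb) h3m

end Radical2

section Radical3
variable {Ω : Type*} [Field Ω] [IsAlgClosed Ω] [CharZero Ω]

set_option maxHeartbeats 1000000 in
lemma mem_of_quartic (E : Subfield Ω)
    (hrad : ∀ (x : Ω) (n : ℕ), n ≠ 0 → x ^ n ∈ E → x ∈ E)
    {x b c d e : Ω} (hb : b ∈ E) (hc : c ∈ E) (hd : d ∈ E) (he : e ∈ E)
    (hx : x ^ 4 + b * x ^ 3 + c * x ^ 2 + d * x + e = 0) : x ∈ E := by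
  have hm : ∀ n : ℕ, ((n : Ω)) ∈ E := fun n => natCast_mem E n
  have h3m : (3 : Ω) ∈ E := by simpa using hm 3
  have h4m : (4 : Ω) ∈ E := by simpa using hm 4
  have h8m : (8 : Ω) ∈ E := by simpa using hm 8
  have h16m : (16 : Ω) ∈ E := by simpa using hm 16
  have h64m : (64 : Ω) ∈ E := by simpa using hm 64
  obtain ⟨β, hβ⟩ := exists_root_cubic (b + x) (c + b * x + x ^ 2) (d + c * x + b * x ^ 2 + x ^ 3)
  obtain ⟨γ, hγ⟩ := exists_root_quadratic (b + x + β) (c + b * x + x ^ 2 + (b + x) * β + β ^ 2)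
  set u1 : Ω := x + β - γ - (-b - x - β - γ) with hu1
  set u2 : Ω := x - β + γ - (-b - x - β - γ) with hu2
  set u3 : Ω := x - β - γ + (-b - x - β - γ) with hu3
  have A1 : u1 ^ 2 + u2 ^ 2 + u3 ^ 2 = 3 * b ^ 2 - 8 * c := by
    rw [hu1, hu2, hu3]
    linear_combination (8 : Ω) * hγ
  have A2 : u1 ^ 2 * u2 ^ 2 + u1 ^ 2 * u3 ^ 2 + u2 ^ 2 * u3 ^ 2
      = 3 * b ^ 4 - 16 * b ^ 2 * c + 16 * b * d + 16 * c ^ 2 - 64 * e := by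
    rw [hu1, hu2, hu3]
    linear_combination (16 * γ ^ 2 + 16 * γ * β + 16 * γ * x + 16 * γ * b + 16 * β ^ 2 + 80 * β * x + 32 * β * b + 16 * x ^ 2 + 32 * x * b + 16 * b ^ 2 + (-16) * c) * hγ + ((-64) * x + (-16) * b) * hβ + (64 : Ω) * hx
  have A3 : u1 * u2 * u3 = -b ^ 3 + 4 * b * c - 8 * d := by
    rw [hu1, hu2, hu3]
    linear_combination ((-8) * β + (-8) * x + (-4) * b) * hγ + (8 : Ω) * hβ
  have hA1m : 3 * b ^ 2 - 8 * c ∈ E := E.sub_mem (E.mul_mem h3m (pow_mem hb 2)) (E.mul_mem h8m hc)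
  have hA2m : 3 * b ^ 4 - 16 * b ^ 2 * c + 16 * b * d + 16 * c ^ 2 - 64 * e ∈ E := by
    refine E.sub_mem (E.add_mem (E.add_mem (E.sub_mem ?_ ?_) ?_) ?_) ?_
    · exact E.mul_mem h3m (pow_mem hb 4)
    · exact E.mul_mem (E.mul_mem h16m (pow_mem hb 2)) hc
    · exact E.mul_mem (E.mul_mem h16m hb) hd
    · exact E.mul_mem h16m (pow_mem hc 2)
    · exact E.mul_mem h64m he
  have hA3m : -b ^ 3 + 4 * b * c - 8 * d ∈ E := by
    refine E.sub_mem (E.add_mem (E.neg_mem (pow_mem hb 3)) ?_) (E.mul_mem h8m hd)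
    exact E.mul_mem (E.mul_mem h4m hb) hc
  have husq : ∀ w : Ω, w ^ 2 * (u1 ^ 2 * u2 ^ 2 * u3 ^ 2) = (w * u1 * u2 * u3) * (w * u1 * u2 * u3) → True := fun _ _ => trivial
  have key : ∀ w : Ω, (w ^ 2) ^ 3 + (-(u1 ^ 2 + u2 ^ 2 + u3 ^ 2)) * (w ^ 2) ^ 2
      + (u1 ^ 2 * u2 ^ 2 + u1 ^ 2 * u3 ^ 2 + u2 ^ 2 * u3 ^ 2) * (w ^ 2)
      + (-((u1 * u2 * u3) ^ 2)) = 0 → w ∈ E := by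
    intro w hw
    refine hrad w 2 two_ne_zero ?_
    refine mem_of_cubic E hrad (b := -(u1 ^ 2 + u2 ^ 2 + u3 ^ 2))
      (c := u1 ^ 2 * u2 ^ 2 + u1 ^ 2 * u3 ^ 2 + u2 ^ 2 * u3 ^ 2)
      (d := -((u1 * u2 * u3) ^ 2)) ?_ ?_ ?_ hw
    · rw [A1]; exact E.neg_mem hA1m
    · rw [A2]; exact hA2m
    · rw [A3]; exact E.neg_mem (pow_mem hA3m 2)
  have hu1E : u1 ∈ E := key u1 (by ring)
  have hu2E : u2 ∈ E := key u2 (by ring)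
  have hu3E : u3 ∈ E := key u3 (by ring)
  have hsum : u1 + u2 + u3 = 4 * x + b := by rw [hu1, hu2, hu3]; ring
  have hxeq : x = (u1 + u2 + u3 - b) / 4 := by rw [hsum]; ring
  rw [hxeq]
  exact E.div_mem (E.sub_mem (E.add_mem (E.add_mem hu1E hu2E) hu3E) hb) h4m

end Radical3



lemma solvable_of_natDegree_le_four {K Ω : Type*} [Field K] [Field Ω] [IsAlgClosed Ω]
    [CharZero Ω] [Algebra K Ω] (p : Polynomial K) (h1 : 1 ≤ p.natDegree)
    (h4 : p.natDegree ≤ 4) (x : Ω) (hx : Polynomial.aeval x p = 0) :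
    x ∈ solvableByRad K Ω := by
  set E : Subfield Ω := (solvableByRad K Ω).toSubfield with hE
  have hEiff : ∀ y : Ω, y ∈ E ↔ y ∈ solvableByRad K Ω := fun y => Iff.rfl
  have hrad : ∀ (y : Ω) (n : ℕ), n ≠ 0 → y ^ n ∈ E → y ∈ E := by
    intro y n hn hy
    exact solvableByRad.rad_mem hn hy
  have hbase : ∀ k : K, algebraMap K Ω k ∈ E := fun k =>
    IntermediateField.algebraMap_mem (solvableByRad K Ω) k
  rw [← hEiff]
  have hp0 : p ≠ 0 := fun h => by simp [h] at h1
  have hlead : algebraMap K Ω (p.coeff p.natDegree) ≠ 0 := by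
    rw [Polynomial.coeff_natDegree]
    exact (map_ne_zero (algebraMap K Ω)).mpr (Polynomial.leadingCoeff_ne_zero.mpr hp0)
  have hs : ∑ i ∈ Finset.range (p.natDegree + 1), algebraMap K Ω (p.coeff i) * x ^ i = 0 := by
    rw [← hx, Polynomial.aeval_eq_sum_range]
    exact Finset.sum_congr rfl fun i _ => (Algebra.smul_def _ _).symm
  obtain ⟨r, hr⟩ : ∃ r, p.natDegree = r := ⟨_, rfl⟩
  rw [hr] at hs hlead h1 h4
  interval_cases r
  · -- degree 1
    simp only [Finset.sum_range_succ, Finset.sum_range_zero, zero_add, pow_zero, mul_one,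
      pow_one] at hs
    have hxeq : x = -(algebraMap K Ω (p.coeff 0)) / algebraMap K Ω (p.coeff 1) := by
      rw [eq_div_iff hlead]
      linear_combination hs
    rw [hxeq]
    exact E.div_mem (E.neg_mem (hbase _)) (hbase _)
  · -- degree 2
    simp only [Finset.sum_range_succ, Finset.sum_range_zero, zero_add, pow_zero, mul_one,
      pow_one] at hs
    refine mem_of_quadratic E hrad (b := algebraMap K Ω (p.coeff 1 / p.coeff 2))
      (c := algebraMap K Ω (p.coeff 0 / p.coeff 2)) (hbase _) (hbase _) ?_
    rw [map_div₀, map_div₀]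
    field_simp
    linear_combination hs
  · -- degree 3
    simp only [Finset.sum_range_succ, Finset.sum_range_zero, zero_add, pow_zero, mul_one,
      pow_one] at hs
    refine mem_of_cubic E hrad (b := algebraMap K Ω (p.coeff 2 / p.coeff 3))
      (c := algebraMap K Ω (p.coeff 1 / p.coeff 3))
      (d := algebraMap K Ω (p.coeff 0 / p.coeff 3)) (hbase _) (hbase _) (hbase _) ?_
    rw [map_div₀, map_div₀, map_div₀]
    field_simp
    linear_combination hs
  · -- degree 4
    simp only [Finset.sum_range_succ, Finset.sum_range_zero, zero_add, pow_zero, mul_one,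
      pow_one] at hs
    refine mem_of_quartic E hrad (b := algebraMap K Ω (p.coeff 3 / p.coeff 4))
      (c := algebraMap K Ω (p.coeff 2 / p.coeff 4))
      (d := algebraMap K Ω (p.coeff 1 / p.coeff 4))
      (e := algebraMap K Ω (p.coeff 0 / p.coeff 4)) (hbase _) (hbase _) (hbase _) (hbase _) ?_
    rw [map_div₀, map_div₀, map_div₀, map_div₀]
    field_simp
    linear_combination hs


open Polynomial in
noncomputable def iotaEquiv (F : Type*) [Field F] :
    MvPolynomial (Fin 1) F ≃+* Polynomial F :=
  (MvPolynomial.finSuccEquiv F 0).toRingEquiv.trans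
    (Polynomial.mapEquiv (MvPolynomial.isEmptyRingEquiv F (Fin 0)))

open Polynomial in
noncomputable def thetaEquiv (F : Type*) [Field F] :
    MvPolynomial (Fin 2) F ≃+* Polynomial (Polynomial F) :=
  (MvPolynomial.finSuccEquiv F 1).toRingEquiv.trans (Polynomial.mapEquiv (iotaEquiv F))

lemma iota_injective (F : Type*) [Field F] : Function.Injective (iotaEquiv F) :=
  (iotaEquiv F).injective

lemma theta_C {F : Type*} [Field F] (a : F) :
    thetaEquiv F (MvPolynomial.C a) = Polynomial.C (Polynomial.C a) := by
  simp [thetaEquiv, iotaEquiv, MvPolynomial.finSuccEquiv_apply,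
    MvPolynomial.isEmptyRingEquiv, MvPolynomial.isEmptyAlgEquiv]
  exact MvPolynomial.coeff_zero_C (σ := Fin 0) a

lemma theta_X0 {F : Type*} [Field F] :
    thetaEquiv F (MvPolynomial.X 0) = Polynomial.X := by
  simp [thetaEquiv, MvPolynomial.finSuccEquiv_X_zero]

lemma theta_X1 {F : Type*} [Field F] :
    thetaEquiv F (MvPolynomial.X 1) = Polynomial.C Polynomial.X := by
  have h : (MvPolynomial.X (1 : Fin 2) : MvPolynomial (Fin 2) F)
      = MvPolynomial.X (Fin.succ 0) := rfl
  show Polynomial.map _ ((MvPolynomial.finSuccEquiv F 1) (MvPolynomial.X 1)) = _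
  rw [h, MvPolynomial.finSuccEquiv_X_succ, Polynomial.map_C]
  congr 1
  show Polynomial.mapEquiv (MvPolynomial.isEmptyRingEquiv F (Fin 0))
    ((MvPolynomial.finSuccEquiv F 0) (MvPolynomial.X 0)) = _
  rw [MvPolynomial.finSuccEquiv_X_zero, Polynomial.mapEquiv_apply, Polynomial.map_X]

lemma theta_natDegree {F : Type*} [Field F] (f : MvPolynomial (Fin 2) F) :
    (thetaEquiv F f).natDegree = f.degreeOf 0 := by
  have : thetaEquiv F f
      = (MvPolynomial.finSuccEquiv F 1 f).map (iotaEquiv F : MvPolynomial (Fin 1) F →+* _) := rfl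
  rw [this, Polynomial.natDegree_map_eq_of_injective (iota_injective F),
    MvPolynomial.natDegree_finSuccEquiv]

lemma algC_ratfunc (F : Type*) [Field F] (a : F) :
    algebraMap (Polynomial F) (RatFunc F) (Polynomial.C a) = algebraMap F (RatFunc F) a := by
  rw [show (Polynomial.C a : Polynomial F) = algebraMap F (Polynomial F) a from rfl,
    ← IsScalarTower.algebraMap_apply]

lemma theta_map_eq (F : Type*) [Field F] :
    (Polynomial.mapRingHom (algebraMap (Polynomial F) (RatFunc F))).comp
      (thetaEquiv F : MvPolynomial (Fin 2) F →+* Polynomial (Polynomial F))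
    = MvPolynomial.eval₂Hom (Polynomial.C.comp (algebraMap F (RatFunc F)))
        ![Polynomial.X, Polynomial.C RatFunc.X] := by
  apply MvPolynomial.ringHom_ext
  · intro a
    simp only [RingHom.comp_apply, RingHom.coe_coe, theta_C, Polynomial.coe_mapRingHom,
      Polynomial.map_C, MvPolynomial.eval₂Hom_C]
    rw [algC_ratfunc]
  · intro i
    fin_cases i
    · simp [theta_X0]
    · simp [theta_X1, RatFunc.algebraMap_X]

lemma psi_eq {F : Type*} [Field F] {Ω : Type*} [Field Ω] [Algebra (RatFunc F) Ω] (α : Ω) :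
    (MvPolynomial.eval₂Hom ((algebraMap (RatFunc F) Ω).comp (algebraMap F (RatFunc F)))
      ![α, algebraMap (RatFunc F) Ω RatFunc.X])
    = (Polynomial.aeval α : Polynomial (RatFunc F) →ₐ[RatFunc F] Ω).toRingHom.comp
        ((Polynomial.mapRingHom (algebraMap (Polynomial F) (RatFunc F))).comp
          (thetaEquiv F : MvPolynomial (Fin 2) F →+* Polynomial (Polynomial F))) := by
  apply MvPolynomial.ringHom_ext
  · intro a
    simp only [MvPolynomial.eval₂Hom_C, RingHom.comp_apply, RingHom.coe_coe, theta_C,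
      Polynomial.coe_mapRingHom, Polynomial.map_C, AlgHom.toRingHom_eq_coe, AlgHom.coe_toRingHom,
      Polynomial.aeval_C]
    rw [algC_ratfunc]
  · intro i
    fin_cases i
    · simp [theta_X0]
    · simp [theta_X1, RatFunc.algebraMap_X]
/-- Let `F` be algebraically closed of characteristic zero and `f ∈ F[x₁,x₂]` irreducible
of total degree `d ≥ 2` with `deg_{x₁} f = r ≤ 4`.  Let `g(x₁) = f(x₁, t) ∈ F(t)[x₁]`.
Then `g` has degree `r`, all its roots (in an algebraic closure of `F(t)`) are solvable by
radicals over `F(t)`, each root `α` satisfies `f(α, t) = 0`, and for all but finitely many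
points `(a, b)` of the curve `f = 0` there is a root `α` of `g` and a specialization
homomorphism fixing `F`, sending `t` to `b` and `α` to `a`   (i.e. `a = α(b)`). -/
theorem parametrization_by_partial_degree
    {F : Type*} [Field F] [IsAlgClosed F] [CharZero F]
    (f : MvPolynomial (Fin 2) F) (hf : Irreducible f)
    (d r : ℕ) (hd : f.totalDegree = d) (hd2 : 2 ≤ d)
    (hr : MvPolynomial.degreeOf 0 f = r) (hr1 : 1 ≤ r) (hr4 : r ≤ 4) :
    let K := RatFunc F
    let Ω := AlgebraicClosure K
    let g : Polynomial K :=
      MvPolynomial.eval₂ (Polynomial.C.comp (algebraMap F K))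
        ![Polynomial.X, Polynomial.C RatFunc.X] f
    g.natDegree = r ∧
    (∀ x ∈ g.rootSet Ω, x ∈ solvableByRad K Ω) ∧
    (∀ α ∈ g.rootSet Ω,
      MvPolynomial.eval₂ ((algebraMap K Ω).comp (algebraMap F K))
        ![α, algebraMap K Ω RatFunc.X] f = 0) ∧
    ∃ Δ : Finset (F × F), ∀ a b : F,
      MvPolynomial.eval ![a, b] f = 0 → (a, b) ∉ Δ →
        ∃ (α : Ω) (_ : α ∈ g.rootSet Ω) (R : Subring Ω) (φ : R →+* F),
          (∀ c : F, ∃ h : algebraMap K Ω (algebraMap F K c) ∈ R, φ ⟨_, h⟩ = c) ∧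
          (∃ hX : algebraMap K Ω RatFunc.X ∈ R, φ ⟨_, hX⟩ = b) ∧
          (∃ hα : α ∈ R, φ ⟨α, hα⟩ = a) := by
  intro K Ω g
  classical
  haveI : CharZero K := charZero_of_injective_algebraMap (algebraMap F K).injective
  haveI : CharZero Ω := charZero_of_injective_algebraMap (algebraMap K Ω).injective
  -- the polynomial over F[y]
  have hgdef : g = Polynomial.map (algebraMap (Polynomial F) K) (thetaEquiv F f) := by
    show MvPolynomial.eval₂ _ _ f = _
    rw [← MvPolynomial.coe_eval₂Hom, ← theta_map_eq F]
    rfl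
  have hPdeg : (thetaEquiv F f).natDegree = r := by rw [theta_natDegree, hr]
  have hdeg : g.natDegree = r := by
    rw [hgdef, Polynomial.natDegree_map_eq_of_injective
      (IsFractionRing.injective (Polynomial F) K), hPdeg]
  have hPirr : Irreducible (thetaEquiv F f) := (MulEquiv.irreducible_iff (thetaEquiv F)).mpr hf
  have hPprim : (thetaEquiv F f).IsPrimitive := by
    intro a ha
    rcases ha with ⟨q, hq⟩
    rcases hPirr.isUnit_or_isUnit hq with h | h
    · exact Polynomial.isUnit_C.mp h
    · exfalso
      have h1 : (thetaEquiv F f).natDegree = 0 := by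
        have h2 := Polynomial.natDegree_mul_le (p := Polynomial.C a) (q := q)
        rw [← hq] at h2
        have h3 := Polynomial.natDegree_eq_zero_of_isUnit h
        have h4 : (Polynomial.C a : Polynomial (Polynomial F)).natDegree = 0 :=
          Polynomial.natDegree_C a
        omega
      omega
  have hgirr : Irreducible g := by
    rw [hgdef]
    exact (hPprim.irreducible_iff_irreducible_map_fraction_map (K := K)).mp hPirr
  have hgne : g ≠ 0 := by
    intro h0
    rw [h0, Polynomial.natDegree_zero] at hdeg
    omega
  refine ⟨hdeg, ?_, ?_, ?_⟩
  · -- solvability by radicals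
    intro x hx
    exact solvable_of_natDegree_le_four g (by omega) (by omega) x
      (Polynomial.aeval_eq_zero_of_mem_rootSet hx)
  · -- roots satisfy f(α, t) = 0
    intro α hα
    have h := psi_eq (F := F) α
    show MvPolynomial.eval₂ _ _ f = 0
    rw [← MvPolynomial.coe_eval₂Hom, h]
    show Polynomial.aeval α (Polynomial.map (algebraMap (Polynomial F) K) (thetaEquiv F f)) = 0
    rw [← hgdef]
    exact Polynomial.aeval_eq_zero_of_mem_rootSet hα
  · -- specialization
    refine ⟨∅, ?_⟩
    intro a b heval _
    have hdegne : g.degree ≠ 0 := by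
      rw [Polynomial.degree_eq_natDegree hgne, hdeg]
      exact_mod_cast (by omega : (r : ℤ) ≠ 0)
    obtain ⟨α, hαroot⟩ := IsAlgClosed.exists_aeval_eq_zero Ω g hdegne
    have hα : α ∈ g.rootSet Ω := Polynomial.mem_rootSet.mpr ⟨hgne, hαroot⟩
    set ψ : MvPolynomial (Fin 2) F →+* Ω :=
      MvPolynomial.eval₂Hom ((algebraMap K Ω).comp (algebraMap F K))
        ![α, algebraMap K Ω RatFunc.X] with hψ
    have hψfact : ∀ p : MvPolynomial (Fin 2) F,
        ψ p = Polynomial.aeval α (Polynomial.map (algebraMap (Polynomial F) K)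
          (thetaEquiv F p)) := by
      intro p
      rw [hψ, psi_eq (F := F) α]
      rfl
    have hker : ∀ p : MvPolynomial (Fin 2) F, ψ p = 0 → f ∣ p := by
      intro p hp
      rw [hψfact] at hp
      have hmin1 : minpoly K α ∣ g := minpoly.dvd K α hαroot
      have hgm : g ∣ Polynomial.map (algebraMap (Polynomial F) K) (thetaEquiv F p) := by
        obtain ⟨u, hu⟩ := hmin1
        rcases hgirr.isUnit_or_isUnit hu with h | h
        · exact absurd h (minpoly.not_isUnit K α)
        · rcases h with ⟨v, rfl⟩
          have hgdvdm : g ∣ minpoly K α :=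
            ⟨(↑v⁻¹ : Polynomial K), by rw [hu, mul_assoc]; simp⟩
          exact hgdvdm.trans (minpoly.dvd K α hp)
      by_cases hp0 : thetaEquiv F p = 0
      · have hp0' : p = 0 := by
          have h7 := congrArg (thetaEquiv F).symm hp0
          simpa using h7
        rw [hp0']
        exact dvd_zero f
      · have hcont0 : algebraMap (Polynomial F) K (thetaEquiv F p).content ≠ 0 := by
          rw [map_ne_zero_iff _ (IsFractionRing.injective (Polynomial F) K)]
          exact fun h => hp0 ((Polynomial.content_eq_zero_iff).mp h)
        have heq2 : Polynomial.map (algebraMap (Polynomial F) K) (thetaEquiv F p)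
            = Polynomial.C (algebraMap (Polynomial F) K (thetaEquiv F p).content)
              * Polynomial.map (algebraMap (Polynomial F) K) (thetaEquiv F p).primPart := by
          conv_lhs => rw [(thetaEquiv F p).eq_C_content_mul_primPart]
          rw [Polynomial.map_mul, Polynomial.map_C]
        have hgm2 : g ∣ Polynomial.map (algebraMap (Polynomial F) K)
            (thetaEquiv F p).primPart := by
          rw [heq2] at hgm
          have hcu : IsUnit (Polynomial.C (algebraMap (Polynomial F) K
              (thetaEquiv F p).content)) :=
            Polynomial.isUnit_C.mpr (isUnit_iff_ne_zero.mpr hcont0)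
          exact (IsUnit.dvd_mul_left hcu).mp hgm
        have hPdvd : (thetaEquiv F f) ∣ (thetaEquiv F p).primPart :=
          hPprim.dvd_of_fraction_map_dvd_fraction_map
            (by rw [← hgdef]; exact hgm2)
        have h5 : (thetaEquiv F f) ∣ (thetaEquiv F p) := hPdvd.trans (Polynomial.primPart_dvd _)
        have h6 := map_dvd (thetaEquiv F).symm h5
        simpa using h6
    have hkill : ∀ p ∈ RingHom.ker ψ, (MvPolynomial.eval ![a, b]) p = 0 := by
      intro p hp
      obtain ⟨q, rfl⟩ := hker p (by rwa [RingHom.mem_ker] at hp)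
      rw [map_mul, heval, zero_mul]
    set lft := Ideal.Quotient.lift (RingHom.ker ψ) (MvPolynomial.eval ![a, b]) hkill with hlft
    set e := RingHom.quotientKerEquivRange ψ with he
    set φ : ψ.range →+* F := lft.comp (e.symm : ψ.range →+* _) with hφ
    have hfwd : ∀ p : MvPolynomial (Fin 2) F,
        e (Ideal.Quotient.mk (RingHom.ker ψ) p) = ⟨ψ p, ⟨p, rfl⟩⟩ := fun p => rfl
    have hkey : ∀ p : MvPolynomial (Fin 2) F,
        φ ⟨ψ p, ⟨p, rfl⟩⟩ = (MvPolynomial.eval ![a, b]) p := by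
      intro p
      have h1 : e.symm ⟨ψ p, ⟨p, rfl⟩⟩ = Ideal.Quotient.mk (RingHom.ker ψ) p := by
        rw [← hfwd]
        exact e.symm_apply_apply _
      show lft (e.symm ⟨ψ p, ⟨p, rfl⟩⟩) = _
      rw [h1, hlft]
      exact Ideal.Quotient.lift_mk _ _ _
    refine ⟨α, hα, ψ.range, φ, ?_, ?_, ?_⟩
    · intro c
      have hc : ψ (MvPolynomial.C c) = algebraMap K Ω (algebraMap F K c) := by simp [hψ]
      refine ⟨⟨MvPolynomial.C c, hc⟩, ?_⟩
      rw [show (⟨algebraMap K Ω (algebraMap F K c), ⟨MvPolynomial.C c, hc⟩⟩ : ψ.range)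
          = ⟨ψ (MvPolynomial.C c), ⟨_, rfl⟩⟩ from Subtype.ext hc.symm, hkey]
      simp
    · have hc : ψ (MvPolynomial.X 1) = algebraMap K Ω RatFunc.X := by simp [hψ]
      refine ⟨⟨MvPolynomial.X 1, hc⟩, ?_⟩
      rw [show (⟨algebraMap K Ω RatFunc.X, ⟨MvPolynomial.X 1, hc⟩⟩ : ψ.range)
          = ⟨ψ (MvPolynomial.X 1), ⟨_, rfl⟩⟩ from Subtype.ext hc.symm, hkey]
      simp
    · have hc : ψ (MvPolynomial.X 0) = α := by simp [hψ]
      refine ⟨⟨MvPolynomial.X 0, hc⟩, ?_⟩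
      rw [show (⟨α, ⟨MvPolynomial.X 0, hc⟩⟩ : ψ.range)
          = ⟨ψ (MvPolynomial.X 0), ⟨_, rfl⟩⟩ from Subtype.ext hc.symm, hkey]
      simp
end
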